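/- For any partition μ = (μ_1 ≥ μ_2 ≥ ... ≥ μ_L), iterated application of Bernstein creation operators produces the Schur function: S_{μ_1} ∘ S_{μ_2} ∘ ... ∘ S_{μ_L} applied to 1 equals s_μ. -/

import Mathlib

open scoped Classical

/-- An integer partition: a weakly decreasing sequence of naturals, eventually zero. -/
structure Ptn where
  parts : ℕ → ℕ
  antitone : ∀ i, parts (i + 1) ≤ parts i
  eventually_zero : ∃ N, ∀ n, N ≤ n → parts n = 0

/-- Number of cells of a partition. -/
noncomputable def Ptn.size (μ : Ptn) : ℕ := ∑ᶠ i, μ.parts i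

/-- Containment of partitions. -/
def PtnSub (ν μ : Ptn) : Prop := ∀ i, ν.parts i ≤ μ.parts i

/-- `HS c lam mu` : lam/mu is a horizontal strip of `c` cells. -/
def HS (c : ℕ) (lam mu : Ptn) : Prop :=
  PtnSub mu lam ∧ lam.size = mu.size + c ∧ ∀ i, lam.parts (i + 1) ≤ mu.parts i

/-- `VS c lam mu` : lam/mu is a vertical strip of `c` cells. -/
def VS (c : ℕ) (lam mu : Ptn) : Prop :=
  PtnSub mu lam ∧ lam.size = mu.size + c ∧ ∀ i, lam.parts i ≤ mu.parts i + 1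

variable (F : Type) [Field F]

/-- The Schur basis element `s_μ`, viewed as a coefficient function on partitions. -/
noncomputable def sB (μ : Ptn) : Ptn → F := fun lam => if lam = μ then 1 else 0

/-- Multiplication by the complete homogeneous symmetric function `h_k` (zero for `k < 0`),
acting on Schur coefficient functions via the Pieri rule. -/
noncomputable def Mh (k : ℤ) (P : Ptn → F) : Ptn → F :=
  fun lam => if k < 0 then 0 else ∑ᶠ (mu : Ptn) (_ : HS k.toNat lam mu), P mu

/-- The Hall-adjoint `e_c^⊥` of multiplication by `e_c`, via the dual Pieri rule. -/
noncomputable def eperp (c : ℕ) (P : Ptn → F) : Ptn → F :=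
  fun nu => ∑ᶠ (mu : Ptn) (_ : VS c mu nu), P mu

/-- The Hall-adjoint `h_c^⊥` of multiplication by `h_c`, via the dual Pieri rule. -/
noncomputable def hperp (c : ℕ) (P : Ptn → F) : Ptn → F :=
  fun nu => ∑ᶠ (mu : Ptn) (_ : HS c mu nu), P mu

/-- The Bernstein creation operator `S_m = Σ_{c≥0} (-1)^c M_{h_{m+c}} ∘ e_c^⊥`. -/
noncomputable def Sop (m : ℤ) (P : Ptn → F) : Ptn → F :=
  fun lam => ∑ᶠ c : ℕ, (-1 : F) ^ c * Mh F (m + c) (eperp F c P) lam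

/-- The Jing creation operator `H_m = Σ_{c≥0} q^c S_{m+c} ∘ h_c^⊥`. -/
noncomputable def Hop (q : F) (m : ℤ) (P : Ptn → F) : Ptn → F :=
  fun lam => ∑ᶠ c : ℕ, q ^ c * Sop F (m + c) (hperp F c P) lam

/-- The empty partition. -/
def ptnZero : Ptn := ⟨fun _ => 0, fun _ => le_refl 0, ⟨0, fun _ _ => rfl⟩⟩

/-- The constant symmetric function `1 = s_∅`. -/
noncomputable def oneSym : Ptn → F := sB F ptnZero

-- infra
lemma Ptn.ext' {μ ν : Ptn} (h : ∀ i, μ.parts i = ν.parts i) : μ = ν := by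
  cases μ; cases ν; simp only [Ptn.mk.injEq]; exact funext h

lemma Ptn.anti' (μ : Ptn) {i j : ℕ} (h : i ≤ j) : μ.parts j ≤ μ.parts i :=
  antitone_nat_of_succ_le μ.antitone h

lemma Ptn.size_eq_sum (μ : Ptn) {N : ℕ} (hN : ∀ n, N ≤ n → μ.parts n = 0) :
    μ.size = ∑ i ∈ Finset.range N, μ.parts i := by
  apply finsum_eq_sum_of_support_subset
  intro x hx
  simp only [Function.mem_support] at hx
  simp only [Finset.coe_range, Set.mem_Iio]
  by_contra h
  exact hx (hN x (le_of_not_gt h))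

/-- common bound for three partitions, exceeding i -/
lemma Ptn.exists_bound (a b c : Ptn) (i : ℕ) :
    ∃ N, i < N ∧ (∀ n, N ≤ n → a.parts n = 0) ∧ (∀ n, N ≤ n → b.parts n = 0)
      ∧ (∀ n, N ≤ n → c.parts n = 0) := by
  obtain ⟨Na, ha⟩ := a.eventually_zero
  obtain ⟨Nb, hb⟩ := b.eventually_zero
  obtain ⟨Nc, hc⟩ := c.eventually_zero
  refine ⟨Na + Nb + Nc + i + 1, by omega, fun n hn => ha n (by omega),
    fun n hn => hb n (by omega), fun n hn => hc n (by omega)⟩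

lemma sum_shift_le (lam ν : Ptn) (h : ∀ j, lam.parts (j + 1) ≤ ν.parts j) :
    lam.size ≤ lam.parts 0 + ν.size := by
  obtain ⟨N, -, h1, h2, -⟩ := Ptn.exists_bound lam ν ν 0
  rw [lam.size_eq_sum (N := N + 1) (fun n hn => h1 n (by omega)),
    ν.size_eq_sum (N := N) h2, Finset.sum_range_succ']
  have : ∑ k ∈ Finset.range N, lam.parts (k + 1) ≤ ∑ k ∈ Finset.range N, ν.parts k :=
    Finset.sum_le_sum (fun j _ => h j)
  omega

lemma sum_shift_eq (lam ν : Ptn) (h : ∀ j, lam.parts (j + 1) = ν.parts j) :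
    lam.size = lam.parts 0 + ν.size := by
  obtain ⟨N, -, h1, h2, -⟩ := Ptn.exists_bound lam ν ν 0
  rw [lam.size_eq_sum (N := N + 1) (fun n hn => h1 n (by omega)),
    ν.size_eq_sum (N := N) h2, Finset.sum_range_succ']
  have : ∑ k ∈ Finset.range N, lam.parts (k + 1) = ∑ k ∈ Finset.range N, ν.parts k :=
    Finset.sum_congr rfl (fun j _ => h j)
  omega

lemma size_lt_of_lt {ν μ : Ptn} (hsub : PtnSub ν μ) {i : ℕ} (hi : ν.parts i < μ.parts i) :
    ν.size < μ.size := by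
  obtain ⟨N, hiN, h1, h2, -⟩ := Ptn.exists_bound ν μ μ i
  rw [ν.size_eq_sum h1, μ.size_eq_sum h2]
  exact Finset.sum_lt_sum (fun j _ => hsub j) ⟨i, Finset.mem_range.2 hiN, hi⟩

lemma size_update_eq (ν q : Ptn) (i w : ℕ)
    (hq : ∀ j, q.parts j = Function.update ν.parts i w j) :
    q.size + ν.parts i = ν.size + w := by
  obtain ⟨N, hiN, h1, h2, -⟩ := Ptn.exists_bound ν q q i
  rw [ν.size_eq_sum h1, q.size_eq_sum h2]
  have hm : i ∈ Finset.range N := Finset.mem_range.2 hiN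
  rw [Finset.sum_congr rfl (fun j _ => hq j), Finset.sum_update_of_mem hm,
    Finset.sum_eq_sum_sdiff_singleton_add hm (fun j => ν.parts j)]
  omega

lemma finite_sub (μ : Ptn) : {ν : Ptn | PtnSub ν μ}.Finite := by
  obtain ⟨N, hN⟩ := μ.eventually_zero
  apply Set.Finite.of_finite_image (f := fun (ν : Ptn) => (fun j : Fin N => ν.parts j))
  · apply Set.Finite.subset (Set.Finite.pi (t := fun j : Fin N => Set.Iic (μ.parts j))
      (fun j => Set.finite_Iic _))
    rintro g ⟨ν, hν, rfl⟩
    intro j _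
    exact hν j
  · rintro ν hν ν' hν' hg
    apply Ptn.ext'
    intro j
    by_cases hj : j < N
    · exact congrFun hg ⟨j, hj⟩
    · have h1 := hν j; have h2 := hν' j
      have := hN j (by omega)
      omega

def consPtn (m : ℕ) (μ : Ptn) (h : μ.parts 0 ≤ m) : Ptn where
  parts := fun i => match i with | 0 => m | (j + 1) => μ.parts j
  antitone := by
    intro i
    match i with
    | 0 => exact h
    | (j + 1) => exact μ.antitone j
  eventually_zero := by
    obtain ⟨N, hN⟩ := μ.eventually_zero
    refine ⟨N + 1, fun n hn => ?_⟩
    match n, hn with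
    | (j + 1), hn => exact hN j (by omega)

@[simp] lemma consPtn_parts_zero (m : ℕ) (μ : Ptn) (h) : (consPtn m μ h).parts 0 = m := rfl
@[simp] lemma consPtn_parts_succ (m : ℕ) (μ : Ptn) (h) (j : ℕ) :
    (consPtn m μ h).parts (j + 1) = μ.parts j := rfl

lemma consPtn_size (m : ℕ) (μ : Ptn) (h) : (consPtn m μ h).size = μ.size + m := by
  have := sum_shift_eq (consPtn m μ h) μ (fun j => rfl)
  simp at this
  omega

/-- the toggle map for the sign-reversing involution -/
noncomputable def tog (μ : Ptn) (i : ℕ) (p : ℕ × Ptn) : ℕ × Ptn :=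
  if h : ∃ q : Ptn, ∀ j, q.parts j =
      Function.update p.2.parts i
        (if p.2.parts i < μ.parts i then μ.parts i else μ.parts i - 1) j
  then ((if p.2.parts i < μ.parts i then p.1 - 1 else p.1 + 1), h.choose)
  else p

lemma tog_spec (m c : ℕ) (μ lam ν : Ptn) (hm : μ.parts 0 ≤ m) (i : ℕ)
    (hi : lam.parts (i + 1) ≠ μ.parts i)
    (hmin : ∀ j, j < i → lam.parts (j + 1) = μ.parts j)
    (hH : HS (m + c) lam ν) (hV : VS c μ ν) :
    (HS (m + (tog μ i (c, ν)).1) lam (tog μ i (c, ν)).2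
      ∧ VS (tog μ i (c, ν)).1 μ (tog μ i (c, ν)).2)
    ∧ tog μ i (tog μ i (c, ν)) = (c, ν)
    ∧ ((tog μ i (c, ν)).1 = c + 1 ∨ c = (tog μ i (c, ν)).1 + 1) := by
  obtain ⟨hsubl, hszl, hrow⟩ := hH
  obtain ⟨hsub, hsz, hcol⟩ := hV
  have f1 : ∀ j, j < i → ν.parts j = μ.parts j := fun j hj =>
    le_antisymm (hsub j) (by rw [← hmin j hj]; exact hrow j)
  have f2 : lam.parts (i + 1) < μ.parts i :=
    lt_of_le_of_ne (le_trans (hrow i) (hsub i)) hi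
  have f3 : m + c ≤ lam.parts 0 := by
    have := sum_shift_le lam ν hrow; omega
  have f4 : μ.parts i ≤ lam.parts i := by
    match i, f2, hmin with
    | 0, f2, hmin => exact le_trans hm (by omega)
    | (j + 1), f2, hmin =>
        calc μ.parts (j + 1) ≤ μ.parts j := μ.antitone j
        _ = lam.parts (j + 1) := (hmin j (by omega)).symm
  by_cases hA : ν.parts i < μ.parts i
  · -- Case A : add a cell back to ν in row i
    have hν_i : μ.parts i = ν.parts i + 1 := by have := hcol i; omega
    have hc1 : 1 ≤ c := by have := size_lt_of_lt hsub hA; omega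
    have hanti : ∀ j, Function.update ν.parts i (μ.parts i) (j + 1)
        ≤ Function.update ν.parts i (μ.parts i) j := by
      intro j
      rcases Nat.lt_trichotomy (j + 1) i with h | h | h
      · rw [Function.update_of_ne (by omega), Function.update_of_ne (by omega)]
        exact ν.antitone j
      · rw [h, Function.update_self, Function.update_of_ne (by omega), f1 j (by omega)]
        exact μ.anti' (by omega)
      · by_cases hj : j = i
        · subst hj
          rw [Function.update_of_ne (by omega), Function.update_self]
          exact le_trans (ν.antitone j) (le_of_lt hA)
        · rw [Function.update_of_ne (by omega), Function.update_of_ne hj]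
          exact ν.antitone j
    have hex : ∃ q : Ptn, ∀ j, q.parts j = Function.update ν.parts i (μ.parts i) j := by
      obtain ⟨N, hiN, hN, -, -⟩ := Ptn.exists_bound ν ν ν i
      exact ⟨⟨Function.update ν.parts i (μ.parts i), hanti,
        ⟨N, fun n hn => by rw [Function.update_of_ne (by omega)]; exact hN n hn⟩⟩, fun j => rfl⟩
    have htog : tog μ i (c, ν) = (c - 1, hex.choose) := by
      unfold tog
      simp only [if_pos hA]
      rw [dif_pos hex]
    set q := hex.choose with hqdef
    have hq : ∀ j, q.parts j = Function.update ν.parts i (μ.parts i) j := hex.choose_spec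
    have hq_i : q.parts i = μ.parts i := by rw [hq, Function.update_self]
    have hq_ne : ∀ j, j ≠ i → q.parts j = ν.parts j := fun j hj => by
      rw [hq, Function.update_of_ne hj]
    have hqsz : q.size = ν.size + 1 := by
      have := size_update_eq ν q i (μ.parts i) hq; omega
    rw [htog]
    refine ⟨⟨⟨?_, ?_, ?_⟩, ?_, ?_, ?_⟩, ?_, ?_⟩
    · intro j
      by_cases hj : j = i
      · subst hj; rw [hq_i]; exact f4
      · rw [hq_ne j hj]; exact hsubl j
    · show lam.size = q.size + (m + (c - 1)); omega
    · intro j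
      by_cases hj : j = i
      · subst hj; rw [hq_i]; exact le_of_lt f2
      · rw [hq_ne j hj]; exact hrow j
    · intro j
      by_cases hj : j = i
      · subst hj; rw [hq_i]
      · rw [hq_ne j hj]; exact hsub j
    · show μ.size = q.size + (c - 1); omega
    · intro j
      by_cases hj : j = i
      · subst hj; rw [hq_i]; omega
      · rw [hq_ne j hj]; exact hcol j
    · -- double toggle
      have hq_not : ¬ (q.parts i < μ.parts i) := by rw [hq_i]; omega
      have hex2 : ∃ q' : Ptn, ∀ j, q'.parts j
          = Function.update q.parts i (μ.parts i - 1) j := by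
        refine ⟨ν, fun j => ?_⟩
        by_cases hj : j = i
        · subst hj; rw [Function.update_self]; omega
        · rw [Function.update_of_ne hj, hq_ne j hj]
      unfold tog
      simp only [if_neg hq_not]
      rw [dif_pos hex2]
      have hch : hex2.choose = ν := by
        apply Ptn.ext'
        intro j
        rw [hex2.choose_spec j]
        by_cases hj : j = i
        · subst hj; rw [Function.update_self]; omega
        · rw [Function.update_of_ne hj, hq_ne j hj]
      rw [hch, Nat.sub_add_cancel hc1]
    · right; omega
  · -- Case B : remove a cell from ν in row i
    have hν_i : ν.parts i = μ.parts i := le_antisymm (hsub i) (by omega)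
    have hpos : 1 ≤ μ.parts i := by omega
    have hanti : ∀ j, Function.update ν.parts i (μ.parts i - 1) (j + 1)
        ≤ Function.update ν.parts i (μ.parts i - 1) j := by
      intro j
      rcases Nat.lt_trichotomy (j + 1) i with h | h | h
      · rw [Function.update_of_ne (by omega), Function.update_of_ne (by omega)]
        exact ν.antitone j
      · rw [h, Function.update_self, Function.update_of_ne (by omega), f1 j (by omega)]
        have := μ.anti' (show j ≤ i by omega); omega
      · by_cases hj : j = i
        · subst hj
          rw [Function.update_of_ne (by omega), Function.update_self]
          have := hsubl (j + 1); omega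
        · rw [Function.update_of_ne (by omega), Function.update_of_ne hj]
          exact ν.antitone j
    have hex : ∃ q : Ptn, ∀ j, q.parts j
        = Function.update ν.parts i (μ.parts i - 1) j := by
      obtain ⟨N, hiN, hN, -, -⟩ := Ptn.exists_bound ν ν ν i
      exact ⟨⟨Function.update ν.parts i (μ.parts i - 1), hanti,
        ⟨N, fun n hn => by rw [Function.update_of_ne (by omega)]; exact hN n hn⟩⟩, fun j => rfl⟩
    have htog : tog μ i (c, ν) = (c + 1, hex.choose) := by
      unfold tog
      simp only [if_neg hA]
      rw [dif_pos hex]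
    set q := hex.choose with hqdef
    have hq : ∀ j, q.parts j = Function.update ν.parts i (μ.parts i - 1) j :=
      hex.choose_spec
    have hq_i : q.parts i = μ.parts i - 1 := by rw [hq, Function.update_self]
    have hq_ne : ∀ j, j ≠ i → q.parts j = ν.parts j := fun j hj => by
      rw [hq, Function.update_of_ne hj]
    have hqsz : q.size + 1 = ν.size := by
      have := size_update_eq ν q i (μ.parts i - 1) hq; omega
    rw [htog]
    refine ⟨⟨⟨?_, ?_, ?_⟩, ?_, ?_, ?_⟩, ?_, ?_⟩
    · intro j
      by_cases hj : j = i
      · subst hj; rw [hq_i]; omega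
      · rw [hq_ne j hj]; exact hsubl j
    · show lam.size = q.size + (m + (c + 1)); omega
    · intro j
      by_cases hj : j = i
      · subst hj; rw [hq_i]; omega
      · rw [hq_ne j hj]; exact hrow j
    · intro j
      by_cases hj : j = i
      · subst hj; rw [hq_i]; omega
      · rw [hq_ne j hj]; exact hsub j
    · show μ.size = q.size + (c + 1); omega
    · intro j
      by_cases hj : j = i
      · subst hj; rw [hq_i]; omega
      · rw [hq_ne j hj]; exact hcol j
    · -- double toggle
      have hq_lt : q.parts i < μ.parts i := by rw [hq_i]; omega
      have hex2 : ∃ q' : Ptn, ∀ j, q'.parts j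
          = Function.update q.parts i (μ.parts i) j := by
        refine ⟨ν, fun j => ?_⟩
        by_cases hj : j = i
        · subst hj; rw [Function.update_self]; omega
        · rw [Function.update_of_ne hj, hq_ne j hj]
      unfold tog
      simp only [if_pos hq_lt]
      rw [dif_pos hex2]
      have hch : hex2.choose = ν := by
        apply Ptn.ext'
        intro j
        rw [hex2.choose_spec j]
        by_cases hj : j = i
        · subst hj; rw [Function.update_self]; omega
        · rw [Function.update_of_ne hj, hq_ne j hj]
      rw [hch]
      rfl
    · left; rfl


lemma eperp_sB (c : ℕ) (μ ν : Ptn) :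
    eperp ℚ c (sB ℚ μ) ν = if VS c μ ν then 1 else 0 := by
  unfold eperp
  rw [finsum_eq_single _ μ (fun x hx => by simp [sB, hx])]
  simp [sB, finsum_eq_if]

lemma Mh_ind (m c : ℕ) (μ lam : Ptn) :
    Mh ℚ ((m : ℤ) + (c : ℕ)) (fun ν => if VS c μ ν then (1 : ℚ) else 0) lam
      = ∑ᶠ ν : Ptn, if HS (m + c) lam ν ∧ VS c μ ν then (1 : ℚ) else 0 := by
  unfold Mh
  rw [if_neg (by omega)]
  have h1 : ((m : ℤ) + (c : ℤ)).toNat = m + c := by omega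
  rw [h1]
  apply finsum_congr
  intro ν
  rw [finsum_eq_if]
  by_cases h : HS (m + c) lam ν <;> by_cases h2 : VS c μ ν <;> simp [h, h2]

lemma Sop_sB (m : ℕ) (μ : Ptn) (hm : μ.parts 0 ≤ m) :
    Sop ℚ (m : ℤ) (sB ℚ μ) = sB ℚ (consPtn m μ hm) := by
  funext lam
  have heq : ∀ c : ℕ, Mh ℚ ((m : ℤ) + c) (eperp ℚ c (sB ℚ μ)) lam
      = ∑ ν ∈ (finite_sub μ).toFinset,
          if HS (m + c) lam ν ∧ VS c μ ν then (1 : ℚ) else 0 := by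
    intro c
    have he : eperp ℚ c (sB ℚ μ) = fun ν => if VS c μ ν then (1 : ℚ) else 0 :=
      funext (eperp_sB c μ)
    rw [he, Mh_ind]
    apply finsum_eq_sum_of_support_subset
    intro ν hν
    have hGood : HS (m + c) lam ν ∧ VS c μ ν := by
      by_contra h
      rw [Function.mem_support] at hν
      exact hν (if_neg h)
    simp only [Finset.coe_sort_coe, Set.Finite.coe_toFinset, Set.mem_setOf_eq]
    exact hGood.2.1
  have hsop : Sop ℚ (m : ℤ) (sB ℚ μ) lam
      = ∑ p ∈ (Finset.range (μ.size + 1) ×ˢ (finite_sub μ).toFinset).filter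
          (fun p => HS (m + p.1) lam p.2 ∧ VS p.1 μ p.2), (-1 : ℚ) ^ p.1 := by
    unfold Sop
    rw [finsum_eq_sum_of_support_subset _ (s := Finset.range (μ.size + 1)) ?_]
    · rw [Finset.sum_filter, Finset.sum_product]
      apply Finset.sum_congr rfl
      intro c _
      rw [heq c, Finset.mul_sum]
      apply Finset.sum_congr rfl
      intro ν _
      by_cases h : HS (m + c) lam ν ∧ VS c μ ν <;> simp [h]
    · intro c hc
      simp only [Function.mem_support] at hc
      simp only [Finset.coe_range, Set.mem_Iio]
      by_contra hcon
      apply hc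
      rw [heq c, Finset.sum_eq_zero, mul_zero]
      intro ν _
      rw [if_neg]
      rintro ⟨-, -, hsz, -⟩
      omega
  rw [hsop]
  by_cases hlam : lam = consPtn m μ hm
  · have hset : (Finset.range (μ.size + 1) ×ˢ (finite_sub μ).toFinset).filter
        (fun p => HS (m + p.1) lam p.2 ∧ VS p.1 μ p.2) = {((0 : ℕ), μ)} := by
      subst hlam
      apply Finset.ext
      intro p
      simp only [Finset.mem_filter, Finset.mem_product, Finset.mem_range,
        Set.Finite.mem_toFinset, Set.mem_setOf_eq, Finset.mem_singleton]
      constructor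
      · rintro ⟨⟨hc, hν⟩, ⟨hsubl, hszl, hrow⟩, ⟨hsub, hsz, hcol⟩⟩
        have hνμ : p.2 = μ := by
          apply Ptn.ext'
          intro j
          have h1 := hrow j
          rw [consPtn_parts_succ] at h1
          exact le_antisymm (hsub j) h1
        rw [hνμ] at hsz
        have hp1 : p.1 = 0 := by omega
        rw [Prod.ext_iff]
        exact ⟨hp1, hνμ⟩
      · rintro rfl
        refine ⟨⟨by omega, fun i => le_refl _⟩, ⟨?_, ?_, ?_⟩, ?_, ?_, ?_⟩
        · intro j
          match j with
          | 0 => simpa using hm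
          | (k + 1) => simpa using μ.antitone k
        · show (consPtn m μ hm).size = μ.size + (m + 0)
          rw [consPtn_size]; omega
        · intro j; simp
        · exact fun i => le_refl _
        · show μ.size = μ.size + 0
          omega
        · exact fun i => le_self_add
    rw [hset, Finset.sum_singleton]
    simp [sB, hlam]
  · have hrhs : sB ℚ (consPtn m μ hm) lam = 0 := by simp [sB, hlam]
    rw [hrhs]
    by_cases hE : ∃ j, lam.parts (j + 1) ≠ μ.parts j
    · set i := Nat.find hE with hidef
      have hi : lam.parts (i + 1) ≠ μ.parts i := Nat.find_spec hE
      have hmin : ∀ j, j < i → lam.parts (j + 1) = μ.parts j := fun j hj =>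
        not_not.1 (Nat.find_min hE hj)
      apply Finset.sum_involution (fun p _ => tog μ i p)
      · rintro ⟨c, ν⟩ hp
        simp only [Finset.mem_filter] at hp
        obtain ⟨-, hH, hV⟩ := hp
        obtain ⟨-, -, hsgn⟩ := tog_spec m c μ lam ν hm i hi hmin hH hV
        set t := tog μ i (c, ν) with ht
        show (-1 : ℚ) ^ c + (-1 : ℚ) ^ t.1 = 0
        rcases hsgn with h | h
        · rw [h, pow_succ]; ring
        · rw [h, pow_succ]; ring
      · rintro ⟨c, ν⟩ hp -
        simp only [Finset.mem_filter] at hp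
        obtain ⟨-, hH, hV⟩ := hp
        obtain ⟨-, -, hsgn⟩ := tog_spec m c μ lam ν hm i hi hmin hH hV
        intro heq
        rw [heq] at hsgn
        simp only at hsgn
        omega
      · rintro ⟨c, ν⟩ hp
        simp only [Finset.mem_filter, Finset.mem_product, Finset.mem_range,
          Set.Finite.mem_toFinset, Set.mem_setOf_eq] at hp ⊢
        obtain ⟨-, hH, hV⟩ := hp
        obtain ⟨⟨hH', hV'⟩, -, -⟩ := tog_spec m c μ lam ν hm i hi hmin hH hV
        have hsz := hV'.2.1
        exact ⟨⟨by omega, hV'.1⟩, hH', hV'⟩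
      · rintro ⟨c, ν⟩ hp
        simp only [Finset.mem_filter] at hp
        obtain ⟨-, hH, hV⟩ := hp
        obtain ⟨-, hinv, -⟩ := tog_spec m c μ lam ν hm i hi hmin hH hV
        exact hinv
    · push_neg at hE
      have : (Finset.range (μ.size + 1) ×ˢ (finite_sub μ).toFinset).filter
          (fun p => HS (m + p.1) lam p.2 ∧ VS p.1 μ p.2) = ∅ := by
        apply Finset.eq_empty_of_forall_notMem
        rintro ⟨c, ν⟩ hp
        simp only [Finset.mem_filter] at hp
        obtain ⟨-, ⟨-, hszl, -⟩, ⟨-, hsz, -⟩⟩ := hp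
        have h0 := sum_shift_eq lam μ hE
        have hlam0 : lam.parts 0 = m := by omega
        apply hlam
        apply Ptn.ext'
        intro j
        match j with
        | 0 => simpa using hlam0
        | (k + 1) => simpa using hE k
      rw [this, Finset.sum_empty]


/-- For any partition `μ = (μ₁ ≥ μ₂ ≥ ... ≥ μ_L)`, given as a weakly decreasing
list of naturals, iterated application of Bernstein creation operators to the
constant symmetric function `1 = s_∅` produces the Schur function:
`S_{μ₁} ∘ S_{μ₂} ∘ ... ∘ S_{μ_L} (1) = s_μ`. -/
theorem bernstein_iterated_creates_schur (l : List ℕ) (hl : l.Pairwise (· ≥ ·)) :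
    ∃ μ : Ptn, (∀ i, μ.parts i = l.getD i 0) ∧
      List.foldr (fun (a : ℕ) (P : Ptn → ℚ) => Sop ℚ (a : ℤ) P) (oneSym ℚ) l = sB ℚ μ := by
  revert hl
  induction l with
  | nil =>
    intro hl
    exact ⟨ptnZero, fun i => by simp [ptnZero], rfl⟩
  | cons a t ih =>
    intro hl
    obtain ⟨μ, hparts, hfold⟩ := ih hl.of_cons
    have hm : μ.parts 0 ≤ a := by
      rw [hparts 0]
      cases t with
      | nil => simp
      | cons b t' =>
        simpa using List.rel_of_pairwise_cons hl (a' := b) (by simp)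
    refine ⟨consPtn a μ hm, ?_, ?_⟩
    · intro i
      match i with
      | 0 => rfl
      | (j + 1) => simpa using hparts j
    · rw [List.foldr_cons, hfold]
      exact Sop_sB a μ hm
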